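/- Let ℓ ≥ 2, let j be odd with 1 ≤ j ≤ ℓ, and let w = (w₁, w₂, …, w_{2ℓ}) ∈ 𝔽₄^{2ℓ} with w₂ ≠ 0. If χ_w(O₀) = −1 − 4^{ℓ−1}, then χ_w(Z_{ℓ,j} \ O₀) = 2·4^{ℓ−1} or χ_w(Z_{ℓ,j} \ O₀) = −2·4^{ℓ−1}. -/
import Mathlib


/-- The quadratic form `Q_{ℓ,j}(x₁,…,x_{2ℓ}) = Σ_{i=1}^{j} (α x_{2i-1}² + x_{2i-1}x_{2i} + x_{2i}²)
+ Σ_{i=j+1}^{ℓ} x_{2i-1}x_{2i}`  (coordinates are 0-indexed in Lean). -/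
def Qform {F4 : Type*} [Field F4] (α : F4) (ℓ j : ℕ) (x : Fin (2 * ℓ) → F4) : F4 :=
  ∑ i : Fin ℓ,
    (let a := x ⟨2 * i.val, by have := i.isLt; omega⟩
     let b := x ⟨2 * i.val + 1, by have := i.isLt; omega⟩
     if i.val < j then α * a ^ 2 + a * b + b ^ 2 else a * b)

open scoped Classical in
/-- The value `(-1)^{tr(t)} ∈ ℂ`, where `tr : 𝔽₄ → 𝔽₂`, `tr(t) = t + t²`, is the trace map. -/
noncomputable def chi4 {F4 : Type*} [Field F4] (t : F4) : ℂ :=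
  if t + t ^ 2 = 0 then 1 else -1

/-- The character sum `χ_w(S) = Σ_{v ∈ S} (-1)^{tr(Σ_i w_i v_i)}`. -/
noncomputable def chiSum {F4 : Type*} [Field F4] {m : ℕ} (w : Fin m → F4)
    (S : Set (Fin m → F4)) : ℂ :=
  ∑ᶠ v ∈ S, chi4 (∑ i, w i * v i)

section Aux
variable {F4 : Type*} [Field F4] [Fintype F4]

lemma myChar2 (hc : Fintype.card F4 = 4) : (2 : F4) = 0 := by
  have h := FiniteField.cast_card_eq_zero F4
  rw [hc] at h
  push_cast at h
  have h4 : (2 : F4) * 2 = 0 := by linear_combination h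
  rcases mul_eq_zero.1 h4 with h' | h' <;> exact h'

lemma myPow4 (hc : Fintype.card F4 = 4) (x : F4) : x ^ 4 = x := by
  have := FiniteField.pow_card x
  rwa [hc] at this

lemma cube_eq_one (hc : Fintype.card F4 = 4) (t : F4) (ht : t ≠ 0) : t ^ 3 = 1 := by
  have h4 := myPow4 hc t
  have h1 : t * t ^ 3 = t * 1 := by linear_combination h4
  exact mul_left_cancel₀ ht h1

lemma tr01 (hc : Fintype.card F4 = 4) (t : F4) : t + t ^ 2 = 0 ∨ t + t ^ 2 = 1 := by
  have h2 := myChar2 hc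
  have h4 := myPow4 hc t
  have key : (t + t ^ 2) * (t + t ^ 2 + 1) = 0 := by
    linear_combination h4 + (t + t ^ 2 + t ^ 3) * h2
  rcases mul_eq_zero.1 key with h | h
  · exact Or.inl h
  · exact Or.inr (by linear_combination h - h2)

lemma chi4_zero : chi4 (0 : F4) = 1 := by simp [chi4]

lemma chi4_add (hc : Fintype.card F4 = 4) (s t : F4) :
    chi4 (s + t) = chi4 s * chi4 t := by
  have h2 := myChar2 hc
  have key : (s + t) + (s + t) ^ 2 = (s + s ^ 2) + (t + t ^ 2) := by
    linear_combination (s * t) * h2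
  unfold chi4
  rcases tr01 hc s with hs | hs <;> rcases tr01 hc t with ht | ht
  · rw [if_pos (by rw [key, hs, ht, add_zero]), if_pos hs, if_pos ht, one_mul]
  · rw [if_neg (by rw [key, hs, ht, zero_add]; exact one_ne_zero), if_pos hs,
      if_neg (by rw [ht]; exact one_ne_zero), one_mul]
  · rw [if_neg (by rw [key, hs, ht, add_zero]; exact one_ne_zero),
      if_neg (by rw [hs]; exact one_ne_zero), if_pos ht, mul_one]
  · rw [if_pos (by rw [key, hs, ht]; linear_combination h2),
      if_neg (by rw [hs]; exact one_ne_zero), if_neg (by rw [ht]; exact one_ne_zero)]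
    norm_num

lemma chi4_sq (hc : Fintype.card F4 = 4) (s a : F4) :
    chi4 (s * a ^ 2) = chi4 (s ^ 2 * a) := by
  have h4s := myPow4 hc s
  have h4a := myPow4 hc a
  have key : s * a ^ 2 + (s * a ^ 2) ^ 2 = s ^ 2 * a + (s ^ 2 * a) ^ 2 := by
    linear_combination s ^ 2 * h4a - a ^ 2 * h4s
  unfold chi4
  rw [key]

lemma chi4_prod (hc : Fintype.card F4 = 4) {ι : Type*} (s : Finset ι) (f : ι → F4) :
    chi4 (∑ i ∈ s, f i) = ∏ i ∈ s, chi4 (f i) := by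
  induction s using Finset.cons_induction with
  | empty => simp [chi4]
  | cons a s ha ih => rw [Finset.sum_cons, Finset.prod_cons, chi4_add hc, ih]

lemma sum_chi4_eq_zero (hc : Fintype.card F4 = 4) : ∑ x : F4, chi4 x = 0 := by
  classical
  have h2 := myChar2 hc
  have key : ∀ x : F4, chi4 x = (if x ∈ ({0, 1} : Finset F4) then 1 else -1) := by
    intro x
    unfold chi4
    have hiff : x + x ^ 2 = 0 ↔ (x = 0 ∨ x = 1) := by
      constructor
      · intro h
        have hxx : x * (1 + x) = 0 := by linear_combination h
        rcases mul_eq_zero.1 hxx with h' | h'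
        · exact Or.inl h'
        · exact Or.inr (by linear_combination h' - h2)
      · rintro (rfl | rfl)
        · simp
        · show (1 : F4) + 1 ^ 2 = 0; linear_combination h2
    simp only [Finset.mem_insert, Finset.mem_singleton, hiff]
  rw [Finset.sum_congr rfl fun x _ => key x, Finset.sum_ite, Finset.sum_const, Finset.sum_const]
  have h1 : (Finset.univ.filter (fun x : F4 => x ∈ ({0, 1} : Finset F4))).card = 2 := by
    rw [Finset.filter_mem_eq_inter, Finset.univ_inter]
    rw [Finset.card_insert_of_notMem (by simp), Finset.card_singleton]
  have h2' : (Finset.univ.filter (fun x : F4 => x ∉ ({0, 1} : Finset F4))).card = 2 := by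
    have h3 := Finset.card_filter_add_card_filter_not
      (s := (Finset.univ : Finset F4)) (p := fun x => x ∈ ({0, 1} : Finset F4))
    rw [Finset.card_univ, hc, h1] at h3
    omega
  rw [h1, h2']
  norm_num

open scoped Classical in
lemma sum_chi4_smul (hc : Fintype.card F4 = 4) (s : F4) :
    ∑ x : F4, chi4 (s * x) = if s = 0 then 4 else 0 := by
  classical
  split_ifs with h
  · have hx : ∀ x : F4, chi4 (s * x) = 1 := by
      intro x; rw [h, zero_mul]; exact chi4_zero
    rw [Finset.sum_congr rfl fun x _ => hx x, Finset.sum_const, Finset.card_univ, hc]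
    norm_num
  · have hb := Fintype.sum_bijective (fun x : F4 => s * x) (mulLeft_bijective₀ s h)
      (fun x => chi4 (s * x)) chi4 (fun x => rfl)
    rw [hb, sum_chi4_eq_zero hc]

lemma block_eval (hc : Fintype.card F4 = 4) (t : F4) (ht : t ≠ 0) (cc dd : F4) :
    (∑ a : F4, ∑ b : F4, chi4 (t * a * b + cc * a + dd * b))
      = 4 * chi4 (cc * (t ^ 2 * dd)) := by
  classical
  have h2 := myChar2 hc
  have ht3 := cube_eq_one hc t ht
  have hx : ∀ a : F4, (∑ b : F4, chi4 (t * a * b + cc * a + dd * b))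
      = chi4 (cc * a) * (if t * a + dd = 0 then (4 : ℂ) else 0) := by
    intro a
    rw [← sum_chi4_smul hc (t * a + dd), Finset.mul_sum]
    refine Finset.sum_congr rfl fun b _ => ?_
    rw [← chi4_add hc]
    congr 1
    ring
  rw [Finset.sum_congr rfl fun a _ => hx a]
  have hcond : ∀ a : F4, (t * a + dd = 0) ↔ (a = t ^ 2 * dd) := by
    intro a
    constructor
    · intro h
      linear_combination t ^ 2 * h - a * ht3 - t ^ 2 * dd * h2
    · rintro rfl
      linear_combination dd * ht3 + dd * h2
  calc ∑ a : F4, chi4 (cc * a) * (if t * a + dd = 0 then (4 : ℂ) else 0)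
      = ∑ a : F4, (if a = t ^ 2 * dd then chi4 (cc * a) * 4 else 0) := by
        refine Finset.sum_congr rfl fun a _ => ?_
        rw [mul_ite, mul_zero, if_congr (hcond a) rfl rfl]
    _ = chi4 (cc * (t ^ 2 * dd)) * 4 := by
        rw [Finset.sum_ite_eq' Finset.univ (t ^ 2 * dd) (fun a => chi4 (cc * a) * 4),
          if_pos (Finset.mem_univ _)]
    _ = 4 * chi4 (cc * (t ^ 2 * dd)) := mul_comm _ _

end Aux


def e2 (ℓ : ℕ) : Fin ℓ × Fin 2 ≃ Fin (2 * ℓ) where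
  toFun p := ⟨2 * p.1.val + p.2.val, by have := p.1.isLt; have := p.2.isLt; omega⟩
  invFun k := (⟨k.val / 2, by have := k.isLt; omega⟩, ⟨k.val % 2, by have := k.isLt; omega⟩)
  left_inv p := by
    obtain ⟨i, b⟩ := p
    have hb := b.isLt
    exact Prod.ext (Fin.ext (show (2 * i.val + b.val) / 2 = i.val by omega))
      (Fin.ext (show (2 * i.val + b.val) % 2 = b.val by omega))
  right_inv k := Fin.ext (show 2 * (k.val / 2) + k.val % 2 = k.val by omega)

lemma sum_pairs {M : Type*} [AddCommMonoid M] {ℓ : ℕ} (h : Fin (2 * ℓ) → M) :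
    ∑ k, h k = ∑ i : Fin ℓ,
      (h ⟨2 * i.val, by have := i.isLt; omega⟩ + h ⟨2 * i.val + 1, by have := i.isLt; omega⟩) := by
  rw [← Equiv.sum_comp (e2 ℓ) h, Fintype.sum_prod_type]
  refine Finset.sum_congr rfl fun i _ => ?_
  rw [Fin.sum_univ_two]
  have h0 : e2 ℓ (i, 0) = ⟨2 * i.val, by have := i.isLt; omega⟩ := by
    apply Fin.ext
    show 2 * i.val + (0 : Fin 2).val = 2 * i.val
    simp
  have h1 : e2 ℓ (i, 1) = ⟨2 * i.val + 1, by have := i.isLt; omega⟩ := by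
    apply Fin.ext
    show 2 * i.val + (1 : Fin 2).val = 2 * i.val + 1
    simp
  rw [h0, h1]

def pairFun {β : Type*} {ℓ : ℕ} (g : Fin ℓ → β × β) (k : Fin (2 * ℓ)) : β :=
  if h : k.val % 2 = 0 then (g ⟨k.val / 2, by have := k.isLt; omega⟩).1
  else (g ⟨k.val / 2, by have := k.isLt; omega⟩).2

lemma pairFun_apply0 {β : Type*} {ℓ : ℕ} (g : Fin ℓ → β × β) (i : Fin ℓ)
    (h : 2 * i.val < 2 * ℓ) : pairFun g ⟨2 * i.val, h⟩ = (g i).1 := by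
  unfold pairFun
  rw [dif_pos (show (2 * i.val) % 2 = 0 by omega)]
  exact congrArg (fun x => (g x).1) (Fin.ext (show 2 * i.val / 2 = i.val by omega))

lemma pairFun_apply1 {β : Type*} {ℓ : ℕ} (g : Fin ℓ → β × β) (i : Fin ℓ)
    (h : 2 * i.val + 1 < 2 * ℓ) : pairFun g ⟨2 * i.val + 1, h⟩ = (g i).2 := by
  unfold pairFun
  rw [dif_neg (show ¬((2 * i.val + 1) % 2 = 0) by omega)]
  exact congrArg (fun x => (g x).2) (Fin.ext (show (2 * i.val + 1) / 2 = i.val by omega))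

def pairF (β : Type*) (ℓ : ℕ) : (Fin ℓ → β × β) ≃ (Fin (2 * ℓ) → β) where
  toFun := pairFun
  invFun v i := (v ⟨2 * i.val, by have := i.isLt; omega⟩, v ⟨2 * i.val + 1, by have := i.isLt; omega⟩)
  left_inv g := by
    funext i
    exact Prod.ext (pairFun_apply0 g i _) (pairFun_apply1 g i _)
  right_inv v := by
    funext k
    show pairFun _ k = v k
    unfold pairFun
    by_cases h : k.val % 2 = 0
    · rw [dif_pos h]
      exact congrArg v (Fin.ext (show 2 * (k.val / 2) = k.val by omega))
    · rw [dif_neg h]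
      exact congrArg v (Fin.ext (show 2 * (k.val / 2) + 1 = k.val by omega))

lemma pairF_apply0 {β : Type*} {ℓ : ℕ} (g : Fin ℓ → β × β) (i : Fin ℓ)
    (h : 2 * i.val < 2 * ℓ) : pairF β ℓ g ⟨2 * i.val, h⟩ = (g i).1 :=
  pairFun_apply0 g i h

lemma pairF_apply1 {β : Type*} {ℓ : ℕ} (g : Fin ℓ → β × β) (i : Fin ℓ)
    (h : 2 * i.val + 1 < 2 * ℓ) : pairF β ℓ g ⟨2 * i.val + 1, h⟩ = (g i).2 :=
  pairFun_apply1 g i h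

section Key
variable {F4 : Type*} [Field F4] [Fintype F4]

lemma sum_dot_eq_zero (hc : Fintype.card F4 = 4) {m : ℕ} (w : Fin m → F4) (hw : w ≠ 0) :
    ∑ v : Fin m → F4, chi4 (∑ i, w i * v i) = 0 := by
  classical
  have hpr : ∀ v : Fin m → F4, chi4 (∑ i, w i * v i) = ∏ i, chi4 (w i * v i) :=
    fun v => chi4_prod hc _ _
  rw [Finset.sum_congr rfl fun v _ => hpr v,
    ← Fintype.prod_sum (fun i (x : F4) => chi4 (w i * x))]
  obtain ⟨i₀, hi₀⟩ := Function.ne_iff.1 hw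
  refine Finset.prod_eq_zero (Finset.mem_univ i₀) ?_
  rw [sum_chi4_smul hc, if_neg (by simpa using hi₀)]

open scoped Classical in
lemma keyN (hc : Fintype.card F4 = 4) (α : F4) (hα : α ^ 2 = α + 1)
    (ℓ j : ℕ) (hℓ : 1 ≤ ℓ) (hjodd : Odd j) (hjl : j ≤ ℓ)
    (w : Fin (2 * ℓ) → F4) (hw : w ≠ 0) :
    (∑ v : Fin (2 * ℓ) → F4, if Qform α ℓ j v = 0 then chi4 (∑ i, w i * v i) else 0)
      = 4 ^ (ℓ - 1)
    ∨ (∑ v : Fin (2 * ℓ) → F4, if Qform α ℓ j v = 0 then chi4 (∑ i, w i * v i) else 0)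
      = -3 * 4 ^ (ℓ - 1) := by
  have h2 : (2 : F4) = 0 := myChar2 hc
  set c : Fin ℓ → F4 := fun i => w ⟨2 * i.val, by have := i.isLt; omega⟩ with hcdef
  set d : Fin ℓ → F4 := fun i => w ⟨2 * i.val + 1, by have := i.isLt; omega⟩ with hddef
  have hcfold : ∀ (i : Fin ℓ) (h : 2 * i.val < 2 * ℓ), w ⟨2 * i.val, h⟩ = c i := fun _ _ => rfl
  have hdfold : ∀ (i : Fin ℓ) (h : 2 * i.val + 1 < 2 * ℓ), w ⟨2 * i.val + 1, h⟩ = d i :=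
    fun _ _ => rfl
  set L : F4 := ∑ i : Fin ℓ, (if i.val < j then α ^ 2 * d i + c i else 0) with hL
  set U : F4 := ∑ i : Fin ℓ, c i * d i with hU
  set N : ℂ := ∑ v : Fin (2 * ℓ) → F4,
    if Qform α ℓ j v = 0 then chi4 (∑ i, w i * v i) else 0 with hN
  -- the inner sum for t ≠ 0
  have inner_t : ∀ t : F4, t ≠ 0 →
      (∑ v : Fin (2 * ℓ) → F4, chi4 (t * Qform α ℓ j v + ∑ i, w i * v i))
        = -(4 ^ ℓ) * chi4 ((L + U ^ 2) * t) := by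
    intro t ht
    have ht3 : t ^ 3 = 1 := cube_eq_one hc t ht
    set E : Fin ℓ → F4 := fun i => (if i.val < j then α ^ 2 else 0)
      + t * (if i.val < j then α ^ 2 * d i + c i else 0) + t ^ 2 * (c i * d i) with hE
    set B : Fin ℓ → F4 × F4 → ℂ := fun i p =>
      chi4 (t * (if i.val < j then α * p.1 ^ 2 + p.1 * p.2 + p.2 ^ 2 else p.1 * p.2)
        + c i * p.1 + d i * p.2) with hB
    have step1 : (∑ v : Fin (2 * ℓ) → F4, chi4 (t * Qform α ℓ j v + ∑ i, w i * v i))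
        = ∑ g : Fin ℓ → F4 × F4, ∏ i : Fin ℓ, B i (g i) := by
      rw [← Equiv.sum_comp (pairF F4 ℓ)
        (fun v => chi4 (t * Qform α ℓ j v + ∑ i, w i * v i))]
      refine Finset.sum_congr rfl fun g _ => ?_
      have hQ : t * Qform α ℓ j (pairF F4 ℓ g) + (∑ i, w i * pairF F4 ℓ g i)
          = ∑ i : Fin ℓ,
            (t * (if i.val < j then α * (g i).1 ^ 2 + (g i).1 * (g i).2 + (g i).2 ^ 2
                  else (g i).1 * (g i).2) + c i * (g i).1 + d i * (g i).2) := by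
        rw [Qform, Finset.mul_sum,
          sum_pairs (fun k => w k * pairF F4 ℓ g k), ← Finset.sum_add_distrib]
        refine Finset.sum_congr rfl fun i _ => ?_
        simp only [pairF_apply0, pairF_apply1, hcfold, hdfold]
        ring
      show chi4 _ = _
      rw [hQ, chi4_prod hc]
    have step3 : ∀ i : Fin ℓ, (∑ p : F4 × F4, B i p) = 4 * chi4 (E i) := by
      intro i
      rw [Fintype.sum_prod_type]
      by_cases hi : i.val < j
      · have hrw : ∀ a b : F4, chi4 (t * (α * a ^ 2 + a * b + b ^ 2) + c i * a + d i * b)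
            = chi4 (t * a * b + (t ^ 2 * α ^ 2 + c i) * a + (t ^ 2 + d i) * b) := by
          intro a b
          have e1 : t * (α * a ^ 2 + a * b + b ^ 2) + c i * a + d i * b
              = (t * α) * a ^ 2 + (t * b ^ 2 + (t * a * b + c i * a + d i * b)) := by ring
          have e2 : t * a * b + (t ^ 2 * α ^ 2 + c i) * a + (t ^ 2 + d i) * b
              = (t * α) ^ 2 * a + (t ^ 2 * b + (t * a * b + c i * a + d i * b)) := by ring
          rw [e1, e2, chi4_add hc, chi4_add hc, chi4_sq hc, chi4_sq hc, ← chi4_add hc,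
            ← chi4_add hc]
        have hBi : ∀ a b : F4, B i (a, b)
            = chi4 (t * a * b + (t ^ 2 * α ^ 2 + c i) * a + (t ^ 2 + d i) * b) := by
          intro a b
          simp only [hB, if_pos hi]
          exact hrw a b
        rw [Finset.sum_congr rfl fun a _ => Finset.sum_congr rfl fun b _ => hBi a b,
          block_eval hc t ht _ _]
        congr 1
        congr 1
        simp only [hE, if_pos hi]
        linear_combination (α ^ 2 * (t ^ 3 + 1) + α ^ 2 * (d i) * t + (c i) * t) * ht3
      · have hBi : ∀ a b : F4, B i (a, b) = chi4 (t * a * b + c i * a + d i * b) := by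
          intro a b
          simp only [hB, if_neg hi]
          congr 1
          ring
        rw [Finset.sum_congr rfl fun a _ => Finset.sum_congr rfl fun b _ => hBi a b,
          block_eval hc t ht _ _]
        congr 1
        congr 1
        simp only [hE, if_neg hi]
        ring
    have step5 : ∑ i : Fin ℓ, E i = α ^ 2 + (t * L + t ^ 2 * U) := by
      have hsplit : ∑ i : Fin ℓ, E i
          = (∑ i : Fin ℓ, (if i.val < j then α ^ 2 else 0))
            + (∑ i : Fin ℓ, t * (if i.val < j then α ^ 2 * d i + c i else 0))
            + (∑ i : Fin ℓ, t ^ 2 * (c i * d i)) := by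
        simp only [hE]
        rw [Finset.sum_add_distrib, Finset.sum_add_distrib]
      have hS1 : (∑ i : Fin ℓ, (if i.val < j then α ^ 2 else (0 : F4))) = α ^ 2 := by
        rw [Fin.sum_univ_eq_sum_range (fun k => if k < j then α ^ 2 else (0 : F4)) ℓ]
        rw [← Finset.sum_subset (Finset.range_subset_range.mpr hjl)
          (fun x _ hx => if_neg (by simp only [Finset.mem_range, not_lt] at hx; omega))]
        rw [Finset.sum_congr rfl (fun x hx => if_pos (Finset.mem_range.1 hx)),
          Finset.sum_const, Finset.card_range, nsmul_eq_mul]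
        obtain ⟨m, hm⟩ := hjodd
        rw [hm]
        push_cast
        rw [h2]
        ring
      rw [hsplit, hS1, ← Finset.mul_sum, ← Finset.mul_sum, ← hL, ← hU, add_assoc]
    have step6 : chi4 (α ^ 2 + (t * L + t ^ 2 * U)) = -(chi4 ((L + U ^ 2) * t)) := by
      have h4α := myPow4 hc α
      have hαtr : α ^ 2 + (α ^ 2) ^ 2 = 1 := by linear_combination h4α + hα + α * h2
      have hχα : chi4 (α ^ 2) = -1 := by
        unfold chi4
        rw [if_neg (by rw [hαtr]; exact one_ne_zero)]
      rw [chi4_add hc, hχα,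
        show t * L + t ^ 2 * U = L * t + U * t ^ 2 from by ring,
        chi4_add hc, chi4_sq hc, ← chi4_add hc,
        show L * t + U ^ 2 * t = (L + U ^ 2) * t from by ring]
      ring
    rw [step1, ← Fintype.prod_sum B, Finset.prod_congr rfl fun i _ => step3 i,
      Finset.prod_mul_distrib, Finset.prod_const, Finset.card_univ, Fintype.card_fin,
      ← chi4_prod hc, step5, step6]
    ring
  -- main identity
  have main : (4 : ℂ) * N
      = ∑ t : F4, ∑ v : Fin (2 * ℓ) → F4, chi4 (t * Qform α ℓ j v + ∑ i, w i * v i) := by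
    rw [Finset.sum_comm, hN, Finset.mul_sum]
    refine Finset.sum_congr rfl fun v _ => ?_
    have hsplit : ∀ t : F4, chi4 (t * Qform α ℓ j v + ∑ i, w i * v i)
        = chi4 (Qform α ℓ j v * t) * chi4 (∑ i, w i * v i) := by
      intro t
      rw [← chi4_add hc, mul_comm t]
    rw [Finset.sum_congr rfl fun t _ => hsplit t, ← Finset.sum_mul,
      sum_chi4_smul hc (Qform α ℓ j v)]
    split_ifs with h
    · ring
    · ring
  have t0 : (∑ v : Fin (2 * ℓ) → F4, chi4 ((0 : F4) * Qform α ℓ j v + ∑ i, w i * v i)) = 0 := by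
    have hz : ∀ v : Fin (2 * ℓ) → F4,
        (0 : F4) * Qform α ℓ j v + ∑ i, w i * v i = ∑ i, w i * v i := fun v => by ring
    rw [Finset.sum_congr rfl fun v _ => congrArg chi4 (hz v)]
    exact sum_dot_eq_zero hc w hw
  rw [← Finset.add_sum_erase Finset.univ _ (Finset.mem_univ (0 : F4)), t0, zero_add] at main
  have herase : ∑ t ∈ Finset.univ.erase (0 : F4),
      (∑ v : Fin (2 * ℓ) → F4, chi4 (t * Qform α ℓ j v + ∑ i, w i * v i))
      = -(4 ^ ℓ) * ((if L + U ^ 2 = 0 then (4 : ℂ) else 0) - 1) := by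
    rw [Finset.sum_congr rfl (fun t htm => inner_t t (Finset.mem_erase.1 htm).1),
      ← Finset.mul_sum]
    congr 1
    rw [Finset.sum_erase_eq_sub (Finset.mem_univ (0 : F4))]
    congr 1
    · have : ∀ t : F4, chi4 ((L + U ^ 2) * t) = chi4 ((L + U ^ 2) * t) := fun _ => rfl
      rw [sum_chi4_smul hc]
    · rw [mul_zero, chi4_zero]
  rw [herase] at main
  have h4l : (4 : ℂ) ^ ℓ = 4 * 4 ^ (ℓ - 1) := by
    conv_lhs => rw [show ℓ = (ℓ - 1) + 1 from by omega]
    rw [pow_succ]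
    ring
  by_cases hcase : L + U ^ 2 = 0
  · right
    rw [if_pos hcase] at main
    apply mul_left_cancel₀ (show (4 : ℂ) ≠ 0 by norm_num)
    rw [main, h4l]
    ring
  · left
    rw [if_neg hcase] at main
    apply mul_left_cancel₀ (show (4 : ℂ) ≠ 0 by norm_num)
    rw [main, h4l]
    ring

end Key

theorem stmt12 (F4 : Type*) [Field F4] [Fintype F4] (hc : Fintype.card F4 = 4)
    (α : F4) (hα : α ^ 2 = α + 1)
    (ℓ j : ℕ) (hℓ : 2 ≤ ℓ) (hjodd : Odd j) (hj : 1 ≤ j) (hjl : j ≤ ℓ)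
    (Z : Set (Fin (2 * ℓ) → F4)) (hZ : Z = {x | x ≠ 0 ∧ Qform α ℓ j x = 0})
    (O₀ : Set (Fin (2 * ℓ) → F4)) (hO₀ : O₀ = {x ∈ Z | x ⟨0, by omega⟩ = 0})
    (w : Fin (2 * ℓ) → F4) (hw : w ⟨1, by omega⟩ ≠ 0)
    (hval : chiSum w O₀ = -1 - 4 ^ (ℓ - 1)) :
    chiSum w (Z \ O₀) = 2 * 4 ^ (ℓ - 1) ∨ chiSum w (Z \ O₀) = -(2 * 4 ^ (ℓ - 1)) := by
  classical
  set ZF : Finset (Fin (2 * ℓ) → F4) :=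
    Finset.univ.filter (fun v => v ≠ 0 ∧ Qform α ℓ j v = 0) with hZF
  set OF : Finset (Fin (2 * ℓ) → F4) :=
    ZF.filter (fun v => v ⟨0, by omega⟩ = 0) with hOF
  have hZc : Z = ↑ZF := by
    ext v
    simp [hZ, hZF]
  have hOc : O₀ = ↑OF := by
    ext v
    simp only [hO₀, hZc, Set.mem_setOf_eq, Set.mem_sep_iff, Finset.mem_coe, hOF,
      Finset.mem_filter]
  have hsum : ∀ (S : Set (Fin (2 * ℓ) → F4)) (SF : Finset (Fin (2 * ℓ) → F4)),
      S = ↑SF → chiSum w S = ∑ v ∈ SF, chi4 (∑ i, w i * v i) := by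
    intro S SF hS
    rw [chiSum, hS, finsum_mem_coe_finset]
  have hdiff : Z \ O₀ = ↑(ZF \ OF) := by
    rw [hZc, hOc, Finset.coe_sdiff]
  have hOsub : OF ⊆ ZF := Finset.filter_subset _ _
  have hDsum : chiSum w (Z \ O₀)
      = (∑ v ∈ ZF, chi4 (∑ i, w i * v i)) - (∑ v ∈ OF, chi4 (∑ i, w i * v i)) := by
    rw [hsum _ _ hdiff, Finset.sum_sdiff_eq_sub hOsub]
  have hOval : (∑ v ∈ OF, chi4 (∑ i, w i * v i)) = -1 - 4 ^ (ℓ - 1) := by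
    rw [← hsum O₀ OF hOc]
    exact hval
  have hQ0 : Qform α ℓ j 0 = 0 := by
    simp [Qform]
  have hZF' : ZF = (Finset.univ.filter (fun v => Qform α ℓ j v = 0)).erase 0 := by
    ext v
    simp only [hZF, Finset.mem_filter, Finset.mem_univ, true_and, Finset.mem_erase]
  have hZN : (∑ v ∈ ZF, chi4 (∑ i, w i * v i))
      = (∑ v : Fin (2 * ℓ) → F4,
          if Qform α ℓ j v = 0 then chi4 (∑ i, w i * v i) else 0) - 1 := by
    rw [hZF', Finset.sum_erase_eq_sub (by simp [hQ0]), Finset.sum_filter]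
    congr 1
    show chi4 (∑ i, w i * (0 : Fin (2 * ℓ) → F4) i) = 1
    simp [chi4]
  have hw0 : w ≠ 0 := by
    intro h
    apply hw
    rw [h]
    rfl
  have hkey := keyN hc α hα ℓ j (by omega) hjodd hjl w hw0
  rw [hDsum, hZN, hOval]
  rcases hkey with h | h
  · left
    rw [h]
    ring
  · right
    rw [h]
    ring
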